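/- Let f : R → K be continuous, B a ball in R, and S a ball in K. If Φ_1 f(r, r_-) ∈ S for every r ∈ ℛ_+ with r ∈ B and r_- ∈ B, then Φ_1 f(x,y) ∈ S for all distinct x, y ∈ B. -/
import Mathlib


open scoped ENNReal NNReal
open Filter Topology

noncomputable section

namespace DSW

variable {K : Type*} [NontriviallyNormedField K] [CompleteSpace K] [IsUltrametricDist K]

/-- The ring of integers `R = {x : K | ‖x‖ ≤ 1}`, as a subset of `K`. -/
def Rint (K : Type*) [NontriviallyNormedField K] : Set K := {x : K | ‖x‖ ≤ 1}

/-- `∇ⁿR`: the set of tuples of pairwise distinct elements of `R`. -/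
def nabla (K : Type*) [NontriviallyNormedField K] (n : ℕ) : Set (Fin n → K) :=
  {x | (∀ i, ‖x i‖ ≤ 1) ∧ Function.Injective x}

/-- The `n`-th difference quotient `Φₙ f`. -/
def Phi (f : K → K) : ∀ n : ℕ, (Fin (n + 1) → K) → K
  | 0, x => f (x 0)
  | n + 1, x =>
      (Phi f n (Fin.cons (x 0) fun i => x i.succ.succ) -
        Phi f n (Fin.cons (x 1) fun i => x i.succ.succ)) / (x 0 - x 1)

/-- `f` is a `Cⁿ`-function: `Φₙ f` extends to a continuous function on `R^(n+1)`. -/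
def IsCn (f : K → K) (n : ℕ) : Prop :=
  ∃ g : (Fin (n + 1) → K) → K,
    ContinuousOn g {x | ∀ i, ‖x i‖ ≤ 1} ∧
      ∀ x : Fin (n + 1) → K, (∀ i, ‖x i‖ ≤ 1) → Function.Injective x → g x = Phi f n x

/-- `Dₙ f a = Φₙ f (a, …, a)`, defined (for `n ≥ 1`) as the limit of `Φₙ f` at the
diagonal point `(a, …, a)`, and `D₀ f = f`. -/
def Dq (f : K → K) : ℕ → K → K
  | 0 => f
  | n + 1 => fun a =>
      limUnder (𝓝[{x : Fin (n + 2) → K | Function.Injective x}] fun _ => a) (Phi f (n + 1))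

/-- `ψⱼ f (x, y) = (f x − f y − ∑_{l=1}^{j} (x−y)^l Dₗf y) / (x−y)^(j+1)`. -/
def psi (f : K → K) (j : ℕ) (x y : K) : K :=
  (f x - f y - ∑ l ∈ Finset.Icc 1 j, (x - y) ^ l * Dq f l y) / (x - y) ^ (j + 1)

variable (π : K) (𝒯 : Set K)

/-- `ℛₘ`: the set of sums `∑_{i<m} aᵢ πⁱ` with digits in `𝒯`. -/
def Rm (m : ℕ) : Set K :=
  {x | ∃ a : Fin m → K, (∀ i, a i ∈ 𝒯) ∧ x = ∑ i, a i * π ^ (i : ℕ)}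

/-- `ℛ = ⋃ₘ ℛₘ`. -/
def RR : Set K := ⋃ m, Rm π 𝒯 m

/-- `ℛ₊ = ℛ \ {0}`. -/
def RPlus : Set K := RR π 𝒯 \ {0}

/-- The length `l(r)`: the least `m` with `r ∈ ℛₘ`. -/
def len (r : K) : ℕ := sInf {m | r ∈ Rm π 𝒯 m}

/-- `χ_r`: characteristic function of the disk `{x : ‖x − r‖ ≤ ‖π‖^(l r)}`. -/
def chi (r x : K) : K := if ‖x - r‖ ≤ ‖π‖ ^ len π 𝒯 r then 1 else 0

/-- The truncation `x_m`: the unique element of `ℛₘ` with `‖x − x_m‖ ≤ ‖π‖^m`. -/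
def trunc (x : K) (m : ℕ) : K :=
  Classical.epsilon fun s => s ∈ Rm π 𝒯 m ∧ ‖x - s‖ ≤ ‖π‖ ^ m

/-- `r₋`: the truncation of `r` dropping the top digit. -/
def rminus (r : K) : K := trunc π 𝒯 r (len π 𝒯 r - 1)

open Classical in
/-- `γ_r = 1` if `r = 0`, `γ_r = r − r₋` otherwise. -/
def gamma (r : K) : K := if r = 0 then 1 else r - rminus π 𝒯 r

open Classical in
/-- The wavelet coefficients `b_r(f)` of a continuous function. -/
def b0 (f : K → K) (r : K) : K := if r = 0 then f 0 else f r - f (rminus π 𝒯 r)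

/-- `c` is the coefficient family of the expansion of `f` with respect to the wavelet
basis `{γ_r^(n−j) (x − r)^j χ_r(x) : r ∈ ℛ, 0 ≤ j ≤ n}` of `Cⁿ(R, K)`. -/
def IsExpansion (n : ℕ) (f : K → K) (c : K → ℕ → K) : Prop :=
  ∀ x ∈ Rint K, HasSum
    (fun p : RR π 𝒯 × Fin (n + 1) =>
      c ↑p.1 ↑p.2 * gamma π 𝒯 ↑p.1 ^ (n - (p.2 : ℕ)) * (x - ↑p.1) ^ (p.2 : ℕ) *
        chi π 𝒯 ↑p.1 x)
    (f x)

/-- The coefficients `b_r^{n,j}(f)` of the expansion of `f ∈ Cⁿ(R,K)`. -/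
def bcoef (n : ℕ) (f : K → K) : K → ℕ → K := Classical.epsilon (IsExpansion π 𝒯 n f)

/-- The norm `|f|_n` on `Cⁿ(R, K)`, with values in `ℝ≥0∞`; `|f|_0` is the sup norm and
`|f|_(n+1) = sup_{r ∈ ℛ} max_{0 ≤ j ≤ n} |b_r^{n,j}(f) γ_r⁻¹|`. -/
def CnNorm : ℕ → (K → K) → ℝ≥0∞
  | 0, f => ⨆ x : Rint K, (‖f ↑x‖₊ : ℝ≥0∞)
  | n + 1, f =>
      ⨆ r : RR π 𝒯, ⨆ j : Fin (n + 1),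
        (‖bcoef π 𝒯 n f ↑r ↑j * (gamma π 𝒯 ↑r)⁻¹‖₊ : ℝ≥0∞)

/-- `K` is a local field with uniformizer `π`, residue field of cardinality `q`, and
set of residue representatives `𝒯` (containing `0`). -/
structure LocalFieldData (π : K) (𝒯 : Set K) (q : ℕ) : Prop where
  one_lt_q : 1 < q
  norm_pi : ‖π‖ = (q : ℝ)⁻¹
  norm_discrete : ∀ x : K, x ≠ 0 → ∃ n : ℤ, ‖x‖ = ‖π‖ ^ n
  rep_subset : 𝒯 ⊆ Rint K
  zero_mem : (0 : K) ∈ 𝒯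
  finite_rep : 𝒯.Finite
  card_rep : Nat.card 𝒯 = q
  rep_unique : ∀ x : K, ‖x‖ ≤ 1 → ∃! t, t ∈ 𝒯 ∧ ‖x - t‖ < 1


/-- The norm `|f|₁ = sup_{r ∈ ℛ} |b_r(f) γ_r⁻¹|` on `C¹(R, K)`. -/
def wnorm1 (f : K → K) : ℝ≥0∞ :=
  ⨆ r : RR π 𝒯, (‖b0 π 𝒯 f ↑r * (gamma π 𝒯 ↑r)⁻¹‖₊ : ℝ≥0∞)

/-- The `Cⁿ`-antiderivation `Pₙ f (x) = ∑_{j<n} ∑_m f⁽ʲ⁾(x_m)/(j+1)! (x_{m+1} − x_m)^(j+1)`. -/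
def Pn (n : ℕ) (f : K → K) (x : K) : K :=
  ∑ j ∈ Finset.range n, ∑' m : ℕ,
    iteratedDeriv j f (trunc π 𝒯 x m) / (((j + 1).factorial : ℕ) : K) *
      (trunc π 𝒯 x (m + 1) - trunc π 𝒯 x m) ^ (j + 1)

/-- `Pₙ ∘ Pₙ₋₁ ∘ ⋯ ∘ P₁`. -/
def Tnaux : ℕ → (K → K) → K → K
  | 0, f => f
  | n + 1, f => Pn π 𝒯 (n + 1) (Tnaux n f)


section Proof6

lemma nsub_max (A B : K) : ‖A - B‖ ≤ max ‖A‖ ‖B‖ := by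
  rw [sub_eq_add_neg]
  simpa using IsUltrametricDist.norm_add_le_max A (-B)

variable {π : K} {𝒯 : Set K} {q : ℕ}

lemma norm_pi_pos (hK : LocalFieldData π 𝒯 q) : 0 < ‖π‖ := by
  rw [hK.norm_pi]
  have : (0:ℝ) < q := by exact_mod_cast Nat.lt_of_lt_of_le Nat.zero_lt_one hK.one_lt_q.le
  positivity

lemma norm_pi_lt_one (hK : LocalFieldData π 𝒯 q) : ‖π‖ < 1 := by
  rw [hK.norm_pi]
  have h1 : (1:ℝ) < q := by exact_mod_cast hK.one_lt_q
  exact inv_lt_one_of_one_lt₀ h1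

lemma rep_sep (hK : LocalFieldData π 𝒯 q) {t t' : K} (ht : t ∈ 𝒯) (ht' : t' ∈ 𝒯)
    (hne : t ≠ t') : ‖t - t'‖ = 1 := by
  have h1 : ‖t - t'‖ ≤ 1 := le_trans (nsub_max _ _) (max_le (hK.rep_subset ht) (hK.rep_subset ht'))
  refine le_antisymm h1 ?_
  by_contra h
  push_neg at h
  obtain ⟨u, _, huniq⟩ := hK.rep_unique t (hK.rep_subset ht)
  exact hne ((huniq t ⟨ht, by simpa using zero_lt_one⟩).trans
    (huniq t' ⟨ht', h⟩).symm)

lemma norm_rep (hK : LocalFieldData π 𝒯 q) {t : K} (ht : t ∈ 𝒯) (ht0 : t ≠ 0) : ‖t‖ = 1 := by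
  simpa using rep_sep hK ht hK.zero_mem ht0

lemma norm_lt_pow_le (hK : LocalFieldData π 𝒯 q) {z : K} {m : ℕ} (h : ‖z‖ < ‖π‖ ^ m) :
    ‖z‖ ≤ ‖π‖ ^ (m + 1) := by
  have hπ0 := norm_pi_pos hK
  have hπ1 := norm_pi_lt_one hK
  rcases eq_or_ne z 0 with rfl | hz
  · simp only [norm_zero]
    positivity
  obtain ⟨n, hn⟩ := hK.norm_discrete z hz
  rw [hn] at h ⊢
  rw [← zpow_natCast (‖π‖) m] at h
  have hmn : (m : ℤ) < n := ((zpow_lt_zpow_iff_right_of_lt_one₀ hπ0 hπ1).mp h)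
  have : ((m : ℤ) + 1) ≤ n := hmn
  calc ‖π‖ ^ n ≤ ‖π‖ ^ ((m : ℤ) + 1) :=
        (zpow_le_zpow_iff_right_of_lt_one₀ hπ0 hπ1).mpr this
    _ = ‖π‖ ^ (m + 1) := by
        rw [← zpow_natCast (‖π‖) (m + 1)]
        norm_cast

lemma mem_Rm_zero_iff {x : K} : x ∈ Rm π 𝒯 0 ↔ x = 0 := by
  constructor
  · rintro ⟨a, -, rfl⟩
    simp
  · rintro rfl
    exact ⟨Fin.elim0, fun i => i.elim0, by simp⟩

lemma mem_Rm_succ_iff {x : K} {m : ℕ} :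
    x ∈ Rm π 𝒯 (m + 1) ↔ ∃ s ∈ Rm π 𝒯 m, ∃ t ∈ 𝒯, x = s + t * π ^ m := by
  constructor
  · rintro ⟨a, ha, rfl⟩
    refine ⟨∑ i : Fin m, a i.castSucc * π ^ (i : ℕ),
      ⟨fun i => a i.castSucc, fun i => ha _, rfl⟩, a (Fin.last m), ha _, ?_⟩
    rw [Fin.sum_univ_castSucc]
    simp
  · rintro ⟨s, ⟨a, ha, rfl⟩, t, ht, rfl⟩
    refine ⟨Fin.snoc a t, ?_, ?_⟩
    · intro i
      induction i using Fin.lastCases with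
      | last => simpa using ht
      | cast j => simpa using ha j
    · rw [Fin.sum_univ_castSucc]
      simp

lemma zero_mem_Rm (hK : LocalFieldData π 𝒯 q) (m : ℕ) : (0 : K) ∈ Rm π 𝒯 m := by
  induction m with
  | zero => exact mem_Rm_zero_iff.mpr rfl
  | succ m ih => exact mem_Rm_succ_iff.mpr ⟨0, ih, 0, hK.zero_mem, by simp⟩

lemma Rm_mono (hK : LocalFieldData π 𝒯 q) {m m' : ℕ} (h : m ≤ m') :
    Rm π 𝒯 m ⊆ Rm π 𝒯 m' := by
  induction m', h using Nat.le_induction with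
  | base => exact subset_rfl
  | succ k hk ih =>
    intro x hx
    exact mem_Rm_succ_iff.mpr ⟨x, ih hx, 0, hK.zero_mem, by simp⟩

lemma norm_le_one_of_mem_Rm (hK : LocalFieldData π 𝒯 q) {m : ℕ} {x : K}
    (hx : x ∈ Rm π 𝒯 m) : ‖x‖ ≤ 1 := by
  induction m generalizing x with
  | zero =>
    rw [mem_Rm_zero_iff] at hx
    simp [hx]
  | succ m ih =>
    obtain ⟨s, hs, t, ht, rfl⟩ := mem_Rm_succ_iff.mp hx
    refine (IsUltrametricDist.norm_add_le_max _ _).trans (max_le (ih hs) ?_)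
    rw [norm_mul, norm_pow]
    have h1 : ‖t‖ ≤ 1 := hK.rep_subset ht
    have h2 : ‖π‖ ^ m ≤ 1 := pow_le_one₀ (norm_nonneg _) (norm_pi_lt_one hK).le
    calc ‖t‖ * ‖π‖ ^ m ≤ 1 * 1 := mul_le_mul h1 h2 (by positivity) zero_le_one
      _ = 1 := one_mul 1

lemma Rm_sep (hK : LocalFieldData π 𝒯 q) : ∀ {m : ℕ} {s s' : K}, s ∈ Rm π 𝒯 m →
    s' ∈ Rm π 𝒯 m → ‖s - s'‖ ≤ ‖π‖ ^ m → s = s' := by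
  intro m
  induction m with
  | zero =>
    intro s s' hs hs' _
    rw [mem_Rm_zero_iff] at hs hs'
    rw [hs, hs']
  | succ m ih =>
    intro s s' hs hs' h
    have hπ0 := norm_pi_pos hK
    have hπ1 := norm_pi_lt_one hK
    obtain ⟨y, hy, t, ht, rfl⟩ := mem_Rm_succ_iff.mp hs
    obtain ⟨y', hy', t', ht', rfl⟩ := mem_Rm_succ_iff.mp hs'
    have htt : ‖t - t'‖ ≤ 1 :=
      (nsub_max _ _).trans (max_le (hK.rep_subset ht) (hK.rep_subset ht'))
    have hyy : y = y' := by
      refine ih hy hy' ?_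
      have hd : y - y' = ((y + t * π ^ m) - (y' + t' * π ^ m)) - (t - t') * π ^ m := by ring
      rw [hd]
      refine (nsub_max _ _).trans (max_le (h.trans ?_) ?_)
      · exact pow_le_pow_of_le_one (norm_nonneg _) hπ1.le (Nat.le_succ m)
      · rw [norm_mul, norm_pow]
        calc ‖t - t'‖ * ‖π‖ ^ m ≤ 1 * ‖π‖ ^ m :=
              mul_le_mul_of_nonneg_right htt (by positivity)
          _ = ‖π‖ ^ m := one_mul _
    subst hyy
    have htt' : t = t' := by
      by_contra hne
      have he : ‖(y + t * π ^ m) - (y + t' * π ^ m)‖ = ‖π‖ ^ m := by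
        have : (y + t * π ^ m) - (y + t' * π ^ m) = (t - t') * π ^ m := by ring
        rw [this, norm_mul, norm_pow, rep_sep hK ht ht' hne, one_mul]
      rw [he, pow_succ] at h
      nlinarith [pow_pos hπ0 m]
    rw [htt']

lemma trunc_exists (hK : LocalFieldData π 𝒯 q) {x : K} (hx : ‖x‖ ≤ 1) (m : ℕ) :
    ∃ s, s ∈ Rm π 𝒯 m ∧ ‖x - s‖ ≤ ‖π‖ ^ m := by
  have hπ0 := norm_pi_pos hK
  have hπne : π ≠ 0 := by
    intro h
    rw [h, norm_zero] at hπ0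
    exact lt_irrefl 0 hπ0
  induction m with
  | zero => exact ⟨0, mem_Rm_zero_iff.mpr rfl, by simpa⟩
  | succ m ih =>
    obtain ⟨s, hs, hns⟩ := ih
    have hπm : (π : K) ^ m ≠ 0 := pow_ne_zero _ hπne
    set z := (x - s) / π ^ m with hzdef
    have hz : ‖z‖ ≤ 1 := by
      rw [hzdef, norm_div, norm_pow]
      exact div_le_one_of_le₀ hns (by positivity)
    obtain ⟨t, ⟨ht, htz⟩, -⟩ := hK.rep_unique z hz
    refine ⟨s + t * π ^ m, mem_Rm_succ_iff.mpr ⟨s, hs, t, ht, rfl⟩, ?_⟩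
    have hrw : x - (s + t * π ^ m) = (z - t) * π ^ m := by
      rw [hzdef]
      field_simp
      ring
    rw [hrw]
    refine norm_lt_pow_le hK ?_
    rw [norm_mul, norm_pow]
    calc ‖z - t‖ * ‖π‖ ^ m < 1 * ‖π‖ ^ m :=
          mul_lt_mul_of_pos_right htz (by positivity)
      _ = ‖π‖ ^ m := one_mul _

lemma trunc_spec (hK : LocalFieldData π 𝒯 q) {x : K} (hx : ‖x‖ ≤ 1) (m : ℕ) :
    trunc π 𝒯 x m ∈ Rm π 𝒯 m ∧ ‖x - trunc π 𝒯 x m‖ ≤ ‖π‖ ^ m :=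
  Classical.epsilon_spec (trunc_exists hK hx m)

lemma trunc_eq (hK : LocalFieldData π 𝒯 q) {x s : K} (hx : ‖x‖ ≤ 1) {m : ℕ}
    (hs : s ∈ Rm π 𝒯 m) (h : ‖x - s‖ ≤ ‖π‖ ^ m) : trunc π 𝒯 x m = s := by
  obtain ⟨h1, h2⟩ := trunc_spec hK hx m
  refine Rm_sep hK h1 hs ?_
  have hd : trunc π 𝒯 x m - s = (x - s) - (x - trunc π 𝒯 x m) := by ring
  rw [hd]
  exact (nsub_max _ _).trans (max_le h h2)

lemma key_r (hK : LocalFieldData π 𝒯 q) {s t : K} {k : ℕ} (hs : s ∈ Rm π 𝒯 k)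
    (ht : t ∈ 𝒯) (ht0 : t ≠ 0) :
    (s + t * π ^ k) ∈ RPlus π 𝒯 ∧ rminus π 𝒯 (s + t * π ^ k) = s := by
  have hπ0 := norm_pi_pos hK
  have hπne : π ≠ 0 := by
    intro h
    rw [h, norm_zero] at hπ0
    exact lt_irrefl 0 hπ0
  set r := s + t * π ^ k with hrdef
  have hr1 : r ∈ Rm π 𝒯 (k + 1) := mem_Rm_succ_iff.mpr ⟨s, hs, t, ht, rfl⟩
  have hnorm : ‖r - s‖ = ‖π‖ ^ k := by
    have : r - s = t * π ^ k := by rw [hrdef]; ring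
    rw [this, norm_mul, norm_pow, norm_rep hK ht ht0, one_mul]
  have hne : r ≠ s := by
    intro h
    rw [h] at hnorm
    simp only [sub_self, norm_zero] at hnorm
    exact absurd hnorm.symm (by positivity)
  have hnot : r ∉ Rm π 𝒯 k := fun hr' => hne (Rm_sep hK hr' hs hnorm.le)
  have hlen : len π 𝒯 r = k + 1 := by
    refine le_antisymm (Nat.sInf_le hr1) (le_csInf ⟨k + 1, hr1⟩ ?_)
    intro m hm
    by_contra hc
    push_neg at hc
    exact hnot (Rm_mono hK (Nat.lt_succ_iff.mp hc) hm)
  constructor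
  · refine ⟨Set.mem_iUnion.mpr ⟨k + 1, hr1⟩, ?_⟩
    simp only [Set.mem_singleton_iff]
    intro h0
    exact hnot (h0 ▸ zero_mem_Rm hK k)
  · rw [rminus, hlen, Nat.add_sub_cancel]
    exact trunc_eq hK (norm_le_one_of_mem_Rm hK hr1) hs hnorm.le

lemma Phi_one (f : K → K) (x y : K) : Phi f 1 ![x, y] = (f x - f y) / (x - y) := rfl

end Proof6

/-- Key lemma: if `Φ₁f(r, r₋)` lies in the ball `S = {z : ‖z − c‖ < ε}` for every `r ∈ ℛ₊`
with `r, r₋` in the ball `B = {x ∈ R : ‖x − a‖ < δ}`, then `Φ₁f(x, y) ∈ S` for all distinct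
`x, y ∈ B`. -/
theorem statement_6 (π : K) (𝒯 : Set K) (q : ℕ) (hK : LocalFieldData π 𝒯 q)
    (f : K → K) (hf : ContinuousOn f (Rint K))
    (a : K) (ha : a ∈ Rint K) (δ : ℝ) (hδ : 0 < δ) (c : K) (ε : ℝ) (hε : 0 < ε)
    (H : ∀ r ∈ RPlus π 𝒯, ‖r - a‖ < δ → ‖rminus π 𝒯 r - a‖ < δ →
      ‖Phi f 1 ![r, rminus π 𝒯 r] - c‖ < ε) :
    ∀ x ∈ Rint K, ∀ y ∈ Rint K, x ≠ y → ‖x - a‖ < δ → ‖y - a‖ < δ →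
      ‖Phi f 1 ![x, y] - c‖ < ε := by
  intro x hx y hy hxy hxd hyd
  have hπ0 : 0 < ‖π‖ := norm_pi_pos hK
  have hπ1 : ‖π‖ < 1 := norm_pi_lt_one hK
  have hxy0 : 0 < ‖x - y‖ := by
    rw [norm_pos_iff]
    exact sub_ne_zero_of_ne hxy
  have hxy1 : ‖x - y‖ ≤ 1 := (nsub_max x y).trans (max_le hx hy)
  obtain ⟨n, hn⟩ := hK.norm_discrete (x - y) (sub_ne_zero_of_ne hxy)
  have hn0 : 0 ≤ n := by
    by_contra h
    push_neg at h
    have h1 : ‖π‖ ^ (0 : ℤ) < ‖π‖ ^ n :=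
      (zpow_lt_zpow_iff_right_of_lt_one₀ hπ0 hπ1).mpr h
    rw [zpow_zero, ← hn] at h1
    exact absurd hxy1 (not_le.mpr h1)
  set m0 := n.toNat with hm0def
  have hm0 : ‖x - y‖ = ‖π‖ ^ m0 := by
    rw [hn, ← zpow_natCast (‖π‖) m0, hm0def, Int.toNat_of_nonneg hn0]
  have hβ : 0 < ε * ‖x - y‖ := mul_pos hε hxy0
  have hδ' : ‖x - y‖ < δ := by
    have hd : x - y = (x - a) - (y - a) := by ring
    rw [hd]
    exact lt_of_le_of_lt (nsub_max _ _) (max_lt hxd hyd)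
  have hpowm0 : ∀ m : ℕ, m0 ≤ m → ‖π‖ ^ m ≤ ‖x - y‖ := by
    intro m hm
    rw [hm0]
    exact pow_le_pow_of_le_one (norm_nonneg _) hπ1.le hm
  -- the key inductive estimate along truncation chains
  have key : ∀ z : K, ‖z‖ ≤ 1 → ‖z - a‖ < δ → ∀ m, m0 ≤ m →
      ‖(f (trunc π 𝒯 z m) - c * trunc π 𝒯 z m) -
        (f (trunc π 𝒯 z m0) - c * trunc π 𝒯 z m0)‖ < ε * ‖x - y‖ := by
    intro z hz hzd m hm
    induction m, hm using Nat.le_induction with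
    | base => simpa using hβ
    | succ m hm ih =>
      have hTm := trunc_spec hK hz m
      have hTm1 := trunc_spec hK hz (m + 1)
      have hstep : ‖(f (trunc π 𝒯 z (m + 1)) - c * trunc π 𝒯 z (m + 1)) -
          (f (trunc π 𝒯 z m) - c * trunc π 𝒯 z m)‖ < ε * ‖x - y‖ := by
        rcases eq_or_ne (trunc π 𝒯 z (m + 1)) (trunc π 𝒯 z m) with he | he
        · rw [he]
          simpa using hβ
        · obtain ⟨s, hs, t, ht, hst⟩ := mem_Rm_succ_iff.mp hTm1.1
          have hts : ‖t * π ^ m‖ ≤ ‖π‖ ^ m := by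
            rw [norm_mul, norm_pow]
            calc ‖t‖ * ‖π‖ ^ m ≤ 1 * ‖π‖ ^ m :=
                  mul_le_mul_of_nonneg_right (hK.rep_subset ht) (by positivity)
              _ = ‖π‖ ^ m := one_mul _
          have hzs : ‖z - s‖ ≤ ‖π‖ ^ m := by
            have hd : z - s = (z - trunc π 𝒯 z (m + 1)) + t * π ^ m := by
              rw [hst]; ring
            rw [hd]
            refine (IsUltrametricDist.norm_add_le_max _ _).trans (max_le ?_ hts)
            exact hTm1.2.trans (pow_le_pow_of_le_one (norm_nonneg _) hπ1.le (Nat.le_succ m))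
          have hsx : trunc π 𝒯 z m = s := trunc_eq hK hz hs hzs
          have ht0 : t ≠ 0 := by
            rintro rfl
            apply he
            rw [hst, hsx]
            simp
          obtain ⟨hrP, hrm⟩ := key_r hK hs ht ht0
          rw [← hst] at hrP hrm
          rw [← hsx] at hrm
          -- memberships in the ball B
          have hrz : ‖trunc π 𝒯 z (m + 1) - z‖ ≤ ‖x - y‖ := by
            rw [norm_sub_rev]
            exact hTm1.2.trans (hpowm0 (m + 1) (hm.trans (Nat.le_succ m)))
          have hrd : ‖trunc π 𝒯 z (m + 1) - a‖ < δ := by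
            have hd : trunc π 𝒯 z (m + 1) - a = (trunc π 𝒯 z (m + 1) - z) + (z - a) := by ring
            rw [hd]
            exact lt_of_le_of_lt (IsUltrametricDist.norm_add_le_max _ _)
              (max_lt (lt_of_le_of_lt hrz hδ') hzd)
          have hsd : ‖trunc π 𝒯 z m - a‖ < δ := by
            have hd : trunc π 𝒯 z m - a = (trunc π 𝒯 z m - z) + (z - a) := by ring
            rw [hd]
            refine lt_of_le_of_lt (IsUltrametricDist.norm_add_le_max _ _)
              (max_lt (lt_of_le_of_lt ?_ hδ') hzd)
            rw [norm_sub_rev]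
            exact hTm.2.trans (hpowm0 m hm)
          have hH := H (trunc π 𝒯 z (m + 1)) hrP hrd (by rw [hrm]; exact hsd)
          rw [Phi_one, hrm] at hH
          have hne' : trunc π 𝒯 z (m + 1) - trunc π 𝒯 z m ≠ 0 := sub_ne_zero_of_ne he
          have hfact : (f (trunc π 𝒯 z (m + 1)) - c * trunc π 𝒯 z (m + 1)) -
              (f (trunc π 𝒯 z m) - c * trunc π 𝒯 z m) =
              ((f (trunc π 𝒯 z (m + 1)) - f (trunc π 𝒯 z m)) /
                (trunc π 𝒯 z (m + 1) - trunc π 𝒯 z m) - c) *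
              (trunc π 𝒯 z (m + 1) - trunc π 𝒯 z m) := by
            field_simp
            ring
          rw [hfact, norm_mul]
          have hrTm : ‖trunc π 𝒯 z (m + 1) - trunc π 𝒯 z m‖ ≤ ‖x - y‖ := by
            rw [hst, hsx]
            have hd : s + t * π ^ m - s = t * π ^ m := by ring
            rw [hd]
            exact le_trans hts (hpowm0 m hm)
          calc ‖(f (trunc π 𝒯 z (m + 1)) - f (trunc π 𝒯 z m)) /
                (trunc π 𝒯 z (m + 1) - trunc π 𝒯 z m) - c‖ *
                ‖trunc π 𝒯 z (m + 1) - trunc π 𝒯 z m‖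
              ≤ ‖(f (trunc π 𝒯 z (m + 1)) - f (trunc π 𝒯 z m)) /
                (trunc π 𝒯 z (m + 1) - trunc π 𝒯 z m) - c‖ * ‖x - y‖ :=
                mul_le_mul_of_nonneg_left hrTm (norm_nonneg _)
            _ < ε * ‖x - y‖ := mul_lt_mul_of_pos_right hH hxy0
      have hd : (f (trunc π 𝒯 z (m + 1)) - c * trunc π 𝒯 z (m + 1)) -
          (f (trunc π 𝒯 z m0) - c * trunc π 𝒯 z m0) =
          ((f (trunc π 𝒯 z (m + 1)) - c * trunc π 𝒯 z (m + 1)) -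
            (f (trunc π 𝒯 z m) - c * trunc π 𝒯 z m)) +
          ((f (trunc π 𝒯 z m) - c * trunc π 𝒯 z m) -
            (f (trunc π 𝒯 z m0) - c * trunc π 𝒯 z m0)) := by ring
      rw [hd]
      exact lt_of_le_of_lt (IsUltrametricDist.norm_add_le_max _ _) (max_lt hstep ih)
  -- continuity tail
  have tail : ∀ z : K, ‖z‖ ≤ 1 → ∃ m, m0 ≤ m ∧
      ‖(f z - c * z) - (f (trunc π 𝒯 z m) - c * trunc π 𝒯 z m)‖ < ε * ‖x - y‖ := by
    intro z hz
    have hcz : ContinuousWithinAt f (Rint K) z := hf z hz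
    rw [Metric.continuousWithinAt_iff] at hcz
    obtain ⟨δ', hδ'0, hδ'c⟩ := hcz _ hβ
    have hc1 : (0:ℝ) < ‖c‖ + 1 := by positivity
    obtain ⟨N, hN⟩ := exists_pow_lt_of_lt_one
      (lt_min hδ'0 (div_pos hβ hc1)) hπ1
    refine ⟨max m0 N, le_max_left _ _, ?_⟩
    have hT := trunc_spec hK hz (max m0 N)
    have hTN : ‖z - trunc π 𝒯 z (max m0 N)‖ ≤ ‖π‖ ^ N :=
      hT.2.trans (pow_le_pow_of_le_one (norm_nonneg _) hπ1.le (le_max_right _ _))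
    have h1 : ‖f z - f (trunc π 𝒯 z (max m0 N))‖ < ε * ‖x - y‖ := by
      have hmem : trunc π 𝒯 z (max m0 N) ∈ Rint K := norm_le_one_of_mem_Rm hK hT.1
      have hdist : dist (trunc π 𝒯 z (max m0 N)) z < δ' := by
        rw [dist_eq_norm, norm_sub_rev]
        exact lt_of_le_of_lt hTN (hN.trans_le (min_le_left _ _))
      have := hδ'c hmem hdist
      rw [dist_eq_norm, norm_sub_rev] at this
      exact this
    have h2 : ‖c * (z - trunc π 𝒯 z (max m0 N))‖ < ε * ‖x - y‖ := by
      rw [norm_mul]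
      calc ‖c‖ * ‖z - trunc π 𝒯 z (max m0 N)‖ ≤ (‖c‖ + 1) * ‖π‖ ^ N :=
            mul_le_mul (by linarith) hTN (norm_nonneg _) hc1.le
        _ < (‖c‖ + 1) * (ε * ‖x - y‖ / (‖c‖ + 1)) :=
            mul_lt_mul_of_pos_left (hN.trans_le (min_le_right _ _)) hc1
        _ = ε * ‖x - y‖ := mul_div_cancel₀ _ (ne_of_gt hc1)
    have hd : (f z - c * z) - (f (trunc π 𝒯 z (max m0 N)) - c * trunc π 𝒯 z (max m0 N)) =
        (f z - f (trunc π 𝒯 z (max m0 N))) - c * (z - trunc π 𝒯 z (max m0 N)) := by ring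
    rw [hd]
    exact lt_of_le_of_lt (nsub_max _ _) (max_lt h1 h2)
  obtain ⟨m1, hm1, hx1⟩ := tail x hx
  obtain ⟨m2, hm2, hy1⟩ := tail y hy
  have hxk := key x hx hxd m1 hm1
  have hyk := key y hy hyd m2 hm2
  have hXY : trunc π 𝒯 x m0 = trunc π 𝒯 y m0 := by
    refine Rm_sep hK (trunc_spec hK hx m0).1 (trunc_spec hK hy m0).1 ?_
    have hd : trunc π 𝒯 x m0 - trunc π 𝒯 y m0 =
        ((trunc π 𝒯 x m0 - x) + (x - y)) + (y - trunc π 𝒯 y m0) := by ring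
    rw [hd]
    refine (IsUltrametricDist.norm_add_le_max _ _).trans
      (max_le ((IsUltrametricDist.norm_add_le_max _ _).trans (max_le ?_ hm0.le))
        (trunc_spec hK hy m0).2)
    rw [norm_sub_rev]
    exact (trunc_spec hK hx m0).2
  have hcomb : (f x - c * x) - (f y - c * y) =
      (((f x - c * x) - (f (trunc π 𝒯 x m1) - c * trunc π 𝒯 x m1)) +
        ((f (trunc π 𝒯 x m1) - c * trunc π 𝒯 x m1) -
          (f (trunc π 𝒯 x m0) - c * trunc π 𝒯 x m0))) -
      (((f y - c * y) - (f (trunc π 𝒯 y m2) - c * trunc π 𝒯 y m2)) +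
        ((f (trunc π 𝒯 y m2) - c * trunc π 𝒯 y m2) -
          (f (trunc π 𝒯 y m0) - c * trunc π 𝒯 y m0))) := by
    rw [hXY]
    ring
  have hg : ‖(f x - c * x) - (f y - c * y)‖ < ε * ‖x - y‖ := by
    rw [hcomb]
    refine lt_of_le_of_lt (nsub_max _ _) (max_lt ?_ ?_)
    · exact lt_of_le_of_lt (IsUltrametricDist.norm_add_le_max _ _) (max_lt hx1 hxk)
    · exact lt_of_le_of_lt (IsUltrametricDist.norm_add_le_max _ _) (max_lt hy1 hyk)
  rw [Phi_one]
  have hne := sub_ne_zero_of_ne hxy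
  have hq : (f x - f y) / (x - y) - c = ((f x - c * x) - (f y - c * y)) / (x - y) := by
    field_simp
    ring
  rw [hq, norm_div, div_lt_iff₀ hxy0]
  linarith [hg]


end DSW
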